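/- (Theorem 2, second inequality.) If x* minimizes f_ν over M, then for every x ∈ M one has d(x*, x) ≤ N^{−1/ν} · 2 F̂_ν(x). -/

import Mathlib

open Finset

theorem dist_to_barycenter_upper_Fhat {M : Type*} [MetricSpace M] {N : ℕ} (hN : 1 ≤ N)
    (x : Fin N → M) {ν : ℝ} (hν : 1 ≤ ν)
    (Mhat : M → M → ℝ)
    (hMhat : ∀ a b : M, dist a b ≤ Mhat a b)
    (f Fhat : M → ℝ)
    (hf : ∀ y : M, f y = (∑ i, dist y (x i) ^ ν) ^ (1 / ν))
    (hFhat : ∀ y : M, Fhat y = (∑ i, Mhat y (x i) ^ ν) ^ (1 / ν))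
    (xstar : M) (hxstar : ∀ z : M, f xstar ≤ f z)
    (y : M) :
    dist xstar y ≤ (N : ℝ) ^ (-(1 / ν)) * (2 * Fhat y) := by
  have hν0 : 0 < ν := lt_of_lt_of_le one_pos hν
  have hνinv : 0 ≤ 1 / ν := by positivity
  have hNpos : (0 : ℝ) < (N : ℝ) := by exact_mod_cast hN
  have hfF : ∀ z : M, f z ≤ Fhat z := by
    intro z
    rw [hf, hFhat]
    refine Real.rpow_le_rpow (Finset.sum_nonneg fun i _ => Real.rpow_nonneg dist_nonneg _)
      (Finset.sum_le_sum fun i _ => Real.rpow_le_rpow dist_nonneg (hMhat _ _) hν0.le) hνinv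
  have hkey : (N : ℝ) ^ (1 / ν) * dist xstar y ≤ f xstar + f y := by
    have h1 : ((N : ℝ) ^ (1 / ν)) * dist xstar y
        = (∑ _i : Fin N, dist xstar y ^ ν) ^ (1 / ν) := by
      rw [Finset.sum_const, Finset.card_univ, Fintype.card_fin, nsmul_eq_mul,
        Real.mul_rpow (by positivity) (Real.rpow_nonneg dist_nonneg _),
        ← Real.rpow_mul dist_nonneg, mul_one_div, div_self hν0.ne', Real.rpow_one]
    rw [h1]
    have h2 : (∑ i : Fin N, dist xstar y ^ ν) ^ (1 / ν)
        ≤ (∑ i : Fin N, (dist xstar (x i) + dist (x i) y) ^ ν) ^ (1 / ν) := by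
      refine Real.rpow_le_rpow (Finset.sum_nonneg fun i _ => Real.rpow_nonneg dist_nonneg _)
        (Finset.sum_le_sum fun i _ =>
          Real.rpow_le_rpow dist_nonneg (dist_triangle _ _ _) hν0.le) hνinv
    refine h2.trans ?_
    have h3 := Real.Lp_add_le_of_nonneg (s := Finset.univ)
      (f := fun i : Fin N => dist xstar (x i)) (g := fun i : Fin N => dist (x i) y) hν
      (fun i _ => dist_nonneg) (fun i _ => dist_nonneg)
    refine h3.trans ?_
    rw [hf xstar, hf y]
    simp_rw [dist_comm (x _) y]
    exact le_rfl
  have h4 : (N : ℝ) ^ (1 / ν) * dist xstar y ≤ 2 * Fhat y := by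
    refine hkey.trans ?_
    have := (hxstar y).trans (hfF y)
    have := hfF y
    linarith
  have hpow : (0 : ℝ) < (N : ℝ) ^ (1 / ν) := Real.rpow_pos_of_pos hNpos _
  rw [Real.rpow_neg hNpos.le, ← mul_le_mul_iff_right₀ hpow, ← mul_assoc,
    mul_inv_cancel₀ hpow.ne', one_mul]
  exact h4
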